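/- In the Fréchet–Grassmann algebra ℭ on countably many generators (topologized as the product topology on coefficients), a polynomial-in-odd-variables expression is unique: if Σ_{a ∈ {0,1}^n} θ^a f_a = 0 in ℭ for all odd n-tuples θ = (θ₁,…,θ_n) ∈ Λ_od^n, where f_a ∈ ℭ, then f_a = 0 for every multi-index a. -/

import Mathlib

/-- The Grassmann algebra on countably many generators over `ℂ`. -/
noncomputable abbrev LamC := ExteriorAlgebra ℂ (ℕ →₀ ℂ)

/-- The degree-one part. -/
noncomputable def genRC : Submodule ℂ LamC :=
  LinearMap.range (ExteriorAlgebra.ι ℂ (M := ℕ →₀ ℂ))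

/-- The odd part. -/
noncomputable def odPC : Submodule ℂ LamC := ⨆ n : ℕ, genRC ^ (2 * n + 1)

/-- The odd monomial `θ^a = θ₁^{a₁}⋯θ_n^{a_n}` for `a ∈ {0,1}^n`. -/
noncomputable def oddMono (n : ℕ) (θ : Fin n → LamC) (a : Fin n → Bool) : LamC :=
  (List.ofFn fun k => if a k then θ k else 1).prod


/-- Products of generators supported in `s`. -/
def prodSet (s : Finset ℕ) : Set LamC :=
  {x | ∃ l : List (ℕ →₀ ℂ), (∀ v ∈ l, ∀ i ∉ s, v i = 0) ∧
    x = (l.map (ExteriorAlgebra.ι ℂ)).prod}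

lemma prodSet_mono {s t : Finset ℕ} (hst : s ⊆ t) : prodSet s ⊆ prodSet t := by
  rintro x ⟨l, hl, rfl⟩
  exact ⟨l, fun v hv i hi => hl v hv i (fun h => hi (hst h)), rfl⟩

lemma exists_finset_mem_span (x : LamC) :
    ∃ s : Finset ℕ, x ∈ Submodule.span ℂ (prodSet s) := by
  induction x using CliffordAlgebra.induction with
  | algebraMap r =>
      refine ⟨∅, ?_⟩
      have h1 : (1 : LamC) ∈ prodSet ∅ := ⟨[], by simp, by simp⟩
      have := Submodule.smul_mem (Submodule.span ℂ (prodSet ∅)) r (Submodule.subset_span h1)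
      simpa [Algebra.algebraMap_eq_smul_one] using this
  | ι v =>
      exact ⟨v.support, Submodule.subset_span
        ⟨[v], by simp [Finsupp.notMem_support_iff], by simp⟩⟩
  | mul x y hx hy =>
      obtain ⟨s, hs⟩ := hx
      obtain ⟨t, ht⟩ := hy
      refine ⟨s ∪ t, ?_⟩
      have : x * y ∈ Submodule.span ℂ (prodSet s) * Submodule.span ℂ (prodSet t) :=
        Submodule.mul_mem_mul hs ht
      rw [Submodule.span_mul_span] at this
      refine Submodule.span_le.mpr ?_ this
      rintro z ⟨a, ha, b, hb, rfl⟩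
      obtain ⟨la, hla, rfl⟩ := ha
      obtain ⟨lb, hlb, rfl⟩ := hb
      refine Submodule.subset_span ⟨la ++ lb, ?_, by simp⟩
      intro v hv i hi
      rcases List.mem_append.mp hv with h | h
      · exact hla v h i (fun hh => hi (Finset.mem_union_left _ hh))
      · exact hlb v h i (fun hh => hi (Finset.mem_union_right _ hh))
  | add x y hx hy =>
      obtain ⟨s, hs⟩ := hx
      obtain ⟨t, ht⟩ := hy
      exact ⟨s ∪ t,
        Submodule.add_mem _
          (Submodule.span_mono (prodSet_mono Finset.subset_union_left) hs)
          (Submodule.span_mono (prodSet_mono Finset.subset_union_right) ht)⟩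

lemma contract_eq_zero (d : Module.Dual ℂ (ℕ →₀ ℂ)) (s : Finset ℕ)
    (hd : ∀ v : ℕ →₀ ℂ, (∀ i ∉ s, v i = 0) → d v = 0)
    {x : LamC} (hx : x ∈ Submodule.span ℂ (prodSet s)) :
    CliffordAlgebra.contractLeft d x = 0 := by
  induction hx using Submodule.span_induction with
  | mem z hz =>
      obtain ⟨l, hl, rfl⟩ := hz
      induction l with
      | nil => simpa using CliffordAlgebra.contractLeft_one _ d
      | cons v l ihl =>
          simp only [List.map_cons, List.prod_cons]
          rw [CliffordAlgebra.contractLeft_ι_mul]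
          rw [hd v (hl v (List.mem_cons_self)), zero_smul,
            ihl (fun w hw => hl w (List.mem_cons_of_mem _ hw)), mul_zero, sub_zero]
  | zero => simp
  | add a b _ _ ha hb => rw [map_add, ha, hb, add_zero]
  | smul c a _ ha => rw [map_smul, ha, smul_zero]

/-- If multiplication by every generator kills `x`, then `x = 0`. -/
lemma eq_zero_of_gen_mul (x : LamC)
    (hx : ∀ m : ℕ, ExteriorAlgebra.ι ℂ (Finsupp.single m (1:ℂ)) * x = 0) : x = 0 := by
  obtain ⟨s, hs⟩ := exists_finset_mem_span x
  obtain ⟨j, hj⟩ := s.exists_notMem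
  set d : Module.Dual ℂ (ℕ →₀ ℂ) := Finsupp.lapply j with hdd
  have hd : ∀ v : ℕ →₀ ℂ, (∀ i ∉ s, v i = 0) → d v = 0 := fun v hv => hv j hj
  have key := CliffordAlgebra.contractLeft_ι_mul d (Finsupp.single j (1:ℂ)) x
  rw [hx j, map_zero, contract_eq_zero d s hd hs, mul_zero, sub_zero] at key
  have : d (Finsupp.single j (1:ℂ)) = 1 := by simp [hdd]
  rw [this, one_smul] at key
  exact key.symm

lemma gen_mem_odPC (m : ℕ) : ExteriorAlgebra.ι ℂ (Finsupp.single m (1:ℂ)) ∈ odPC := by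
  have h1 : ExteriorAlgebra.ι ℂ (Finsupp.single m (1:ℂ)) ∈ genRC ^ (2 * 0 + 1) := by
    simpa [genRC] using LinearMap.mem_range_self _ _
  exact (le_iSup (fun n : ℕ => genRC ^ (2 * n + 1)) 0) h1

lemma oddMono_succ (n : ℕ) (θ : Fin (n+1) → LamC) (a : Fin (n+1) → Bool) :
    oddMono (n+1) θ a
      = (if a 0 then θ 0 else 1) * oddMono n (fun k => θ k.succ) (fun k => a k.succ) := by
  simp [oddMono, List.ofFn_succ]

lemma sum_split (n : ℕ) (θ : Fin (n+1) → LamC) (f : (Fin (n+1) → Bool) → LamC) :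
    ∑ a : Fin (n+1) → Bool, oddMono (n+1) θ a * f a
      = (∑ a' : Fin n → Bool,
          oddMono n (fun k => θ k.succ) a' * f (Fin.cons false a'))
        + θ 0 * ∑ a' : Fin n → Bool,
            oddMono n (fun k => θ k.succ) a' * f (Fin.cons true a') := by
  rw [← Equiv.sum_comp (Fin.consEquiv (fun _ => Bool))
    (fun a => oddMono (n+1) θ a * f a), Fintype.sum_prod_type, Fintype.sum_bool]
  have ht : ∀ a' : Fin n → Bool,
      oddMono (n+1) θ (Fin.consEquiv (fun _ => Bool) (true, a')) *
          f (Fin.consEquiv (fun _ => Bool) (true, a'))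
        = θ 0 * (oddMono n (fun k => θ k.succ) a' * f (Fin.cons true a')) := by
    intro a'
    have : (Fin.consEquiv (fun _ : Fin (n+1) => Bool)) (true, a') = Fin.cons true a' := rfl
    rw [this, oddMono_succ]
    simp [mul_assoc, Fin.cons_succ]
  have hf : ∀ a' : Fin n → Bool,
      oddMono (n+1) θ (Fin.consEquiv (fun _ => Bool) (false, a')) *
          f (Fin.consEquiv (fun _ => Bool) (false, a'))
        = oddMono n (fun k => θ k.succ) a' * f (Fin.cons false a') := by
    intro a'
    have : (Fin.consEquiv (fun _ : Fin (n+1) => Bool)) (false, a') = Fin.cons false a' := rfl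
    rw [this, oddMono_succ]
    simp [Fin.cons_succ]
  rw [Finset.sum_congr rfl (fun a' _ => ht a'), Finset.sum_congr rfl (fun a' _ => hf a'),
    ← Finset.mul_sum]
  exact add_comm _ _

/-- Uniqueness of the superfield expansion in the Grassmann algebra with
countably many generators: if `Σ_{a ∈ {0,1}^n} θ^a f_a = 0` for all odd
`n`-tuples `θ`, then every coefficient `f_a` vanishes. -/
theorem stmt_17 (n : ℕ) (f : (Fin n → Bool) → LamC)
    (h : ∀ θ : Fin n → LamC, (∀ k, θ k ∈ odPC) →
      (∑ a : Fin n → Bool, oddMono n θ a * f a) = 0) :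
    ∀ a : Fin n → Bool, f a = 0 := by
  induction n with
  | zero =>
      intro a
      have h0 := h (fun k => 0) (fun k => k.elim0)
      rw [show (Finset.univ : Finset (Fin 0 → Bool)) = {a} from Finset.eq_singleton_iff_unique_mem.mpr
        ⟨Finset.mem_univ a, fun b _ => Subsingleton.elim b a⟩] at h0
      simpa [oddMono] using h0
  | succ n ih =>
      -- the `false` coefficients vanish
      have hfalse : ∀ a' : Fin n → Bool, f (Fin.cons false a') = 0 := by
        apply ih
        intro θ' hθ'
        have hcons : ∀ k : Fin (n+1), (Fin.cons (0:LamC) θ' : Fin (n+1) → LamC) k ∈ odPC := by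
          intro k
          refine Fin.cases ?_ ?_ k
          · simpa using Submodule.zero_mem odPC
          · intro i; simpa [Fin.cons_succ] using hθ' i
        have h0 := h (Fin.cons (0:LamC) θ' : Fin (n+1) → LamC) hcons
        rw [sum_split] at h0
        simpa [Fin.cons_succ, Fin.cons_zero] using h0
      -- the `true` coefficients vanish
      have htrue : ∀ a' : Fin n → Bool, f (Fin.cons true a') = 0 := by
        apply ih
        intro θ' hθ'
        apply eq_zero_of_gen_mul
        intro m
        have hcons : ∀ k : Fin (n+1),
            (Fin.cons (ExteriorAlgebra.ι ℂ (Finsupp.single m (1:ℂ))) θ' : Fin (n+1) → LamC) k ∈ odPC := by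
          intro k
          refine Fin.cases ?_ ?_ k
          · simpa using gen_mem_odPC m
          · intro i; simpa [Fin.cons_succ] using hθ' i
        have h0 := h (Fin.cons (ExteriorAlgebra.ι ℂ (Finsupp.single m (1:ℂ))) θ' : Fin (n+1) → LamC) hcons
        rw [sum_split] at h0
        simp only [Fin.cons_succ, Fin.cons_zero] at h0
        rw [Finset.sum_congr rfl (fun a' _ => by rw [hfalse a', mul_zero]),
          Finset.sum_const_zero, zero_add] at h0
        exact h0
      intro a
      rw [← Fin.cons_self_tail a]
      cases hb : a 0
      · exact hfalse _
      · exact htrue _
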